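/- For any extended regular expression R and infinite word w: w satisfies the weak closure of R if and only if (some prefix of w, under the relation ⪯', is a minimal word of L(R)) or (every nonempty proper prefix u of w can be extended to a word u·x in L(R)). -/

import Mathlib

/-- Extended regular expressions modulo an algebra of predicates `P`. -/
inductive ERE (P : Type*) where
  | pred : P → ERE P
  | eps : ERE P
  | union : ERE P → ERE P → ERE P
  | inter : ERE P → ERE P → ERE P
  | concat : ERE P → ERE P → ERE P
  | star : ERE P → ERE P
  | compl : ERE P → ERE P

/-- The finite-word language of an extended regular expression, where
`den` is the denotation function of the predicate algebra. -/
def lang {D P : Type*} (den : P → Set D) : ERE P → Set (List D)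
  | .pred α => {u | ∃ a ∈ den α, u = [a]}
  | .eps => {[]}
  | .union r s => lang den r ∪ lang den s
  | .inter r s => lang den r ∩ lang den s
  | .concat r s => {u | ∃ x ∈ lang den r, ∃ y ∈ lang den s, u = x ++ y}
  | .star r => {u | ∃ L : List (List D), (∀ x ∈ L, x ∈ lang den r) ∧ u = L.flatten}
  | .compl r => (lang den r)ᶜ

/-- Nullability of an extended regular expression. -/
def nullable {P : Type*} : ERE P → Bool
  | .pred _ => false
  | .eps => true
  | .union r s => nullable r || nullable s
  | .inter r s => nullable r && nullable s
  | .concat r s => nullable r && nullable s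
  | .star _ => true
  | .compl r => !nullable r

/-- `x ⪯' u` on finite words: nonempty proper prefix, or `x = ε ≠ u`. -/
def precE {D : Type*} (x u : List D) : Prop :=
  (x ≠ [] ∧ x <+: u ∧ x ≠ u) ∨ (x = [] ∧ u ≠ [])

/-- The minimal words of a language: members with no prefix (under `⪯'`)
in the language. -/
def MinSet {D : Type*} (L : Set (List D)) : Set (List D) :=
  {u | u ∈ L ∧ ¬ ∃ x, precE x u ∧ x ∈ L}

/-- The finite prefix of length `n` of an infinite word. -/
def prefixOf {D : Type*} (w : ℕ → D) (n : ℕ) : List D := (List.range n).map w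

/-- `u ≺ w`: `u` is a nonempty finite prefix of the infinite word `w`. -/
def precInf {D : Type*} (u : List D) (w : ℕ → D) : Prop :=
  ∃ n, 0 < n ∧ u = prefixOf w n

/-- `u ⪯' w`: `u ≺ w` or `u = ε`. -/
def precEInf {D : Type*} (u : List D) (w : ℕ → D) : Prop := precInf u w ∨ u = []

/-- Semantics of the weak closure `wcl(R)` on infinite words. -/
def wclSat {D : Type*} (L : Set (List D)) (w : ℕ → D) : Prop :=
  (∃ u, precEInf u w ∧ u ∈ L) ∨ (∀ u, precInf u w → ∃ x, u ++ x ∈ L)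

/-- `w ⊨ wcl(R)` iff some prefix of `w` (under `⪯'`) is a *minimal* word of
`L(R)`, or every nonempty proper prefix of `w` extends to a word of `L(R)`. -/
theorem wcl_min_prefix {D P : Type*} (den : P → Set D) (R : ERE P) (w : ℕ → D) :
    wclSat (lang den R) w ↔
      ((∃ u, precEInf u w ∧ u ∈ MinSet (lang den R)) ∨
       (∀ u, precInf u w → ∃ x, u ++ x ∈ lang den R)) := by
  classical
  unfold wclSat MinSet precEInf precInf
  constructor
  · rintro (⟨u, hu, huL⟩ | h)
    · left
      have hex : ∃ n, prefixOf w n ∈ lang den R := by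
        rcases hu with ⟨n, _, rfl⟩ | rfl
        · exact ⟨n, huL⟩
        · exact ⟨0, by simpa [prefixOf] using huL⟩
      have hnL : prefixOf w (Nat.find hex) ∈ lang den R := Nat.find_spec hex
      refine ⟨prefixOf w (Nat.find hex), ?_, hnL, ?_⟩
      · by_cases h0 : Nat.find hex = 0
        · right; rw [h0]; simp [prefixOf]
        · left; exact ⟨Nat.find hex, Nat.pos_of_ne_zero h0, rfl⟩
      · rintro ⟨x, hx, hxL⟩
        have : ∃ m < Nat.find hex, x = prefixOf w m := by
          rcases hx with ⟨hne, hpre, hneq⟩ | ⟨rfl, hune⟩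
          · have hlen : x.length ≤ Nat.find hex := by
              have := hpre.length_le; simpa [prefixOf] using this
            have hx' : x = prefixOf w x.length := by
              have heq := List.prefix_iff_eq_take.mp hpre
              rw [heq]
              simp [prefixOf, List.take_range, Nat.min_eq_left hlen,
                ← List.map_take]
            refine ⟨x.length, ?_, hx'⟩
            rcases lt_or_eq_of_le hlen with h | h
            · exact h
            · exact absurd (by rw [hx', h]) hneq
          · refine ⟨0, ?_, by simp [prefixOf]⟩
            rcases Nat.eq_zero_or_pos (Nat.find hex) with h0 | h0
            · exact absurd (by rw [h0]; simp [prefixOf]) hune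
            · exact h0
        rcases this with ⟨m, hm, rfl⟩
        exact Nat.find_min hex hm hxL
    · exact Or.inr h
  · rintro (⟨u, hu, huM⟩ | h)
    · exact Or.inl ⟨u, hu, huM.1⟩
    · exact Or.inr h
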